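/- The group (⊕_{i ∈ ℕ} ℤ/3ℤ) × ℤ, the direct product of a countably infinite direct sum of cyclic groups of order 3 with an infinite cyclic group, has no faithful finite-dimensional linear representation over any field of characteristic different from 3: for every field K with char K ≠ 3 and every natural number n there is no injective group homomorphism from (⊕_{i ∈ ℕ} ℤ/3ℤ) × ℤ into GL_n(K). -/

import Mathlib

open Polynomial

lemma aux_core (L : Type) [Field L] [IsAlgClosed L] (h3 : ((3:ℕ) : L) ≠ 0) (n : ℕ)
    (ψ : Multiplicative (Fin (n+1) → ZMod 3) →* GL (Fin n) L)
    (hψ : Function.Injective ψ) : False := by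
  classical
  set G := Multiplicative (Fin (n+1) → ZMod 3) with hG
  -- the endomorphism representation
  let E : Matrix (Fin n) (Fin n) L →* Module.End L (Fin n → L) :=
    (Matrix.toLinAlgEquiv'.toAlgHom.toRingHom :
      Matrix (Fin n) (Fin n) L →+* Module.End L (Fin n → L)).toMonoidHom
  let F : G →* Module.End L (Fin n → L) :=
    E.comp ((Units.coeHom (Matrix (Fin n) (Fin n) L)).comp ψ)
  have hFinj : Function.Injective F := by
    intro g g' h
    apply hψ
    apply Units.ext
    exact Matrix.toLinAlgEquiv'.injective h
  -- commutativity
  have hcomm : ∀ g h : G, Commute (F g) (F h) := by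
    intro g h
    have : F (g * h) = F (h * g) := by rw [mul_comm]
    exact (by simpa [map_mul] using this : F g * F h = F h * F g)
  -- every element is cubed to one
  have hg3 : ∀ g : G, g ^ 3 = 1 := by
    intro g
    have key : ∀ a : ZMod 3, (3:ℕ) • a = 0 := by decide
    have : (3:ℕ) • g.toAdd = 0 := by funext i; exact key (g.toAdd i)
    calc g ^ 3 = Multiplicative.ofAdd ((3:ℕ) • g.toAdd) := rfl
    _ = 1 := by rw [this]; rfl
  have hcube : ∀ g : G, F g ^ 3 = 1 := by
    intro g
    rw [← map_pow, hg3, map_one]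
  -- semisimplicity
  have hsq : Squarefree ((X : L[X]) ^ 3 - 1) := by
    refine (Polynomial.X_pow_sub_one_separable_iff.mpr ?_).squarefree
    exact_mod_cast h3
  have hss : ∀ g : G, (F g).IsSemisimple := by
    intro g
    refine Module.End.isSemisimple_of_squarefree_aeval_eq_zero hsq ?_
    simp [map_sub, map_pow, hcube g]
  have heig : ∀ (g : G) (μ : L),
      (F g).maxGenEigenspace μ = (F g).eigenspace μ := fun g μ =>
    (hss g).isFinitelySemisimple.maxGenEigenspace_eq_eigenspace μ
  -- simultaneous triangularization
  have hsup : ⨆ χ : G → L, ⨅ g : G, (F g).maxGenEigenspace (χ g) = ⊤ :=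
    Module.End.iSup_iInf_maxGenEigenspace_eq_top_of_iSup_maxGenEigenspace_eq_top_of_commute
      (fun g : G => F g) (fun g h _ => hcomm g h)
      (fun g => Module.End.iSup_maxGenEigenspace_eq_top _)
  have hind : iSupIndep fun χ : G → L => ⨅ g : G, (F g).maxGenEigenspace (χ g) :=
    Module.End.independent_iInf_maxGenEigenspace_of_forall_mapsTo (fun g : G => F g)
      (fun g h φ => Module.End.mapsTo_maxGenEigenspace_of_comm (hcomm h g) φ)
  set W : (G → L) → Submodule L (Fin n → L) :=
    fun χ => ⨅ g : G, (F g).maxGenEigenspace (χ g) with hW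
  -- eigen action
  have hact : ∀ (χ : G → L) (v : Fin n → L), v ∈ W χ → ∀ g : G, F g v = χ g • v := by
    intro χ v hv g
    have : v ∈ (F g).eigenspace (χ g) := by
      rw [← heig]
      exact (Submodule.mem_iInf _).mp hv g
    exact Module.End.mem_eigenspace_iff.mp this
  -- nontrivial joint eigenvalues are cube roots of unity
  have hroot : ∀ χ : G → L, W χ ≠ ⊥ → ∀ g : G, (χ g) ^ 3 = 1 := by
    intro χ hχ g
    obtain ⟨v, hv, hv0⟩ := Submodule.exists_mem_ne_zero_of_ne_bot hχ
    have h1 : (F g ^ 3) v = (χ g) ^ 3 • v := by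
      rw [pow_succ, pow_succ, pow_one]
      simp only [Module.End.mul_apply, hact χ v hv g, map_smul,
        hact χ v hv g, smul_smul]
      ring_nf
    rw [hcube g] at h1
    have h2 : ((χ g) ^ 3 - 1) • v = 0 := by
      rw [sub_smul, one_smul, ← h1]
      simp
    rcases smul_eq_zero.mp h2 with h | h
    · exact sub_eq_zero.mp h
    · exact absurd h hv0
  -- the set of joint eigencharacters
  haveI : Fintype {χ : G → L // W χ ≠ ⊥} := hind.fintypeNeBotOfFiniteDimensional
  have hcardS : Fintype.card {χ : G → L // W χ ≠ ⊥} ≤ n := by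
    have h := hind.subtype_ne_bot_le_finrank
    rwa [Module.finrank_fin_fun] at h
  -- roots of X^3 - 1
  have hpne : ((X : L[X]) ^ 3 - 1) ≠ 0 := by
    simpa using Polynomial.X_pow_sub_C_ne_zero (by norm_num : 0 < 3) (1 : L)
  have hdeg : ((X : L[X]) ^ 3 - 1).natDegree = 3 := by
    simpa using Polynomial.natDegree_X_pow_sub_C (n := 3) (r := (1 : L))
  set R : Finset L := ((X : L[X]) ^ 3 - 1).roots.toFinset with hRdef
  have hRcard : R.card ≤ 3 := by
    calc R.card ≤ Multiset.card ((X : L[X]) ^ 3 - 1).roots := Multiset.toFinset_card_le _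
    _ ≤ ((X : L[X]) ^ 3 - 1).natDegree := Polynomial.card_roots' _
    _ = 3 := hdeg
  -- the injective evaluation map
  let Φ : G → ({χ : G → L // W χ ≠ ⊥} → {x // x ∈ R}) := fun g χ =>
    ⟨χ.1 g, by
      rw [hRdef, Multiset.mem_toFinset, Polynomial.mem_roots hpne]
      simp [Polynomial.IsRoot, hroot χ.1 χ.2 g]⟩
  have hΦ : Function.Injective Φ := by
    intro g g' h
    apply hFinj
    have hagree : ∀ χ : G → L, W χ ≠ ⊥ → χ g = χ g' := fun χ hχ =>
      Subtype.ext_iff.mp (congrFun h ⟨χ, hχ⟩)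
    have hle : ∀ χ : G → L, W χ ≤ LinearMap.eqLocus (F g) (F g') := by
      intro χ
      by_cases hχ : W χ = ⊥
      · rw [hχ]; exact bot_le
      · intro v hv
        show F g v = F g' v
        rw [hact χ v hv g, hact χ v hv g', hagree χ hχ]
    have htop : (⊤ : Submodule L (Fin n → L)) ≤ LinearMap.eqLocus (F g) (F g') := by
      rw [← hsup]; exact iSup_le hle
    apply LinearMap.ext
    intro v
    exact htop Submodule.mem_top
  -- counting
  have hcard := Fintype.card_le_of_injective Φ hΦ
  have hcG : Fintype.card G = 3 ^ (n + 1) := by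
    show Fintype.card (Multiplicative (Fin (n + 1) → ZMod 3)) = 3 ^ (n + 1)
    rw [Fintype.card_multiplicative, Fintype.card_fun, ZMod.card, Fintype.card_fin]
  have hcT : Fintype.card ({χ : G → L // W χ ≠ ⊥} → {x // x ∈ R})
      = R.card ^ Fintype.card {χ : G → L // W χ ≠ ⊥} := by
    rw [Fintype.card_fun, Fintype.card_coe]
  rw [hcG, hcT] at hcard
  have h1 : R.card ^ Fintype.card {χ : G → L // W χ ≠ ⊥} ≤ 3 ^ n :=
    le_trans (Nat.pow_le_pow_left hRcard _) (Nat.pow_le_pow_right (by norm_num) hcardS)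
  have h2 : (3:ℕ) ^ n < 3 ^ (n + 1) := Nat.pow_lt_pow_right (by norm_num) (Nat.lt_succ_self n)
  omega

/-- The group `(⊕_{i ∈ ℕ} ℤ/3ℤ) × ℤ` has no faithful finite-dimensional linear
representation over any field of characteristic different from `3`. -/
theorem stmt_9 (K : Type) [Field K] (hK : ringChar K ≠ 3) (n : ℕ) :
    ¬ ∃ f : Multiplicative ((Π₀ _ : ℕ, ZMod 3) × ℤ) →* GL (Fin n) K,
      Function.Injective f := by
  classical
  rintro ⟨f, hf⟩
  -- embed (Fin (n+1) → ZMod 3) into the direct sum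
  let j : (Fin (n + 1) → ZMod 3) →+ (Π₀ _ : ℕ, ZMod 3) :=
    ∑ i : Fin (n + 1), (DFinsupp.singleAddHom (fun _ : ℕ => ZMod 3) i.val).comp
      (Pi.evalAddMonoidHom (fun _ : Fin (n + 1) => ZMod 3) i)
  have hj : ∀ (x : Fin (n + 1) → ZMod 3) (k : Fin (n + 1)), j x k.val = x k := by
    intro x k
    simp only [j, AddMonoidHom.finset_sum_apply, AddMonoidHom.coe_comp, Function.comp_apply,
      DFinsupp.singleAddHom_apply, Pi.evalAddMonoidHom_apply, DFinsupp.finset_sum_apply]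
    rw [Finset.sum_eq_single k]
    · exact DFinsupp.single_eq_same
    · intro i _ hik
      have hne : (i : ℕ) ≠ (k : ℕ) := fun h => hik (Fin.val_injective h)
      exact DFinsupp.single_eq_of_ne hne.symm
    · intro h; exact absurd (Finset.mem_univ k) h
  have hjinj : Function.Injective j := by
    intro x y hxy
    funext k
    rw [← hj x k, ← hj y k, hxy]
  -- embed into the product with ℤ
  let e : (Fin (n + 1) → ZMod 3) →+ ((Π₀ _ : ℕ, ZMod 3) × ℤ) :=
    (AddMonoidHom.inl (Π₀ _ : ℕ, ZMod 3) ℤ).comp j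
  have heinj : Function.Injective e := by
    intro x y hxy
    exact hjinj (congrArg Prod.fst hxy)
  let ψ₀ : Multiplicative (Fin (n + 1) → ZMod 3) →*
      Multiplicative ((Π₀ _ : ℕ, ZMod 3) × ℤ) := AddMonoidHom.toMultiplicative e
  have hψ₀ : Function.Injective ψ₀ := heinj
  -- pass to the algebraic closure
  let L := AlgebraicClosure K
  let φ : GL (Fin n) K →* GL (Fin n) L :=
    Units.map ((algebraMap K L).mapMatrix : Matrix (Fin n) (Fin n) K →+* _).toMonoidHom
  have hφ : Function.Injective φ := by
    intro u v h
    apply Units.ext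
    have h' := congrArg Units.val h
    have : ((algebraMap K L).mapMatrix) (u : Matrix (Fin n) (Fin n) K)
        = ((algebraMap K L).mapMatrix) (v : Matrix (Fin n) (Fin n) K) := h'
    funext i k
    have := congrFun (congrFun (congrArg (fun M => (M : Matrix (Fin n) (Fin n) L)) this) i) k
    simp only [RingHom.mapMatrix_apply, Matrix.map_apply] at this
    exact (algebraMap K L).injective this
  -- characteristic of L
  have h3K : ((3 : ℕ) : K) ≠ 0 := by
    intro h
    exact hK (CharP.ringChar_of_prime_eq_zero Nat.prime_three h)
  have h3L : ((3 : ℕ) : L) ≠ 0 := by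
    rw [← map_natCast (algebraMap K L)]
    exact fun h => h3K ((algebraMap K L).injective (by simpa using h))
  exact aux_core L h3L n (φ.comp (f.comp ψ₀)) (hφ.comp (hf.comp hψ₀))
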